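/- arXiv:2108.00259 — 5 statements merged into one kernel-verified Lean document; each statement's English description precedes it below -/
import Mathlib

section
/- For every integer k ≥ 2, one step of greedy forward selection satisfies the descent inequality ℓ(u_k) ≤ (1 − 1/k)·ℓ(u_{k−1}) + (1/k)·L_N + (1/k²)·D². -/
open scoped RealInnerProductSpace

private lemma greedy_aux_bar_mem {m N : ℕ} (hN : 0 < N)
    (Φ : Fin N → EuclideanSpace ℝ (Fin m)) :
    (N : ℝ)⁻¹ • ∑ i : Fin N, Φ i ∈ convexHull ℝ (Set.range Φ) := by
  have hws : (0:ℝ) < ∑ _i : Fin N, (1:ℝ) := by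
    simp only [Finset.sum_const, Finset.card_univ, Fintype.card_fin, nsmul_eq_mul, mul_one]
    exact_mod_cast hN
  have h := Finset.centerMass_mem_convexHull (t := (Finset.univ : Finset (Fin N)))
    (w := fun _ : Fin N => (1:ℝ)) (z := Φ) (fun i _ => zero_le_one)
    hws (fun i _ => Set.mem_range_self i)
  simpa [Finset.centerMass] using h

set_option maxHeartbeats 1600000 in
/-- **One-step descent inequality for greedy forward selection.**
For every integer `k ≥ 2`,
`ℓ(u_k) ≤ (1 − 1/k)·ℓ(u_{k−1}) + (1/k)·L_N + (1/k²)·D²`,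
where `L_N = ℓ((1/N) ∑ᵢ Φᵢ)` is the loss of the dense two-layer network. -/
theorem greedy_forward_selection_descent_step
    (m N : ℕ) (hN : 0 < N)
    (Φ : Fin N → EuclideanSpace ℝ (Fin m)) (y : EuclideanSpace ℝ (Fin m))
    (ℓ : EuclideanSpace ℝ (Fin m) → ℝ)
    (hℓ : ∀ z, ℓ z = (1/2) * ‖z - y‖^2)
    (D : ℝ) (hD0 : 0 ≤ D)
    (hD : ∀ u ∈ convexHull ℝ (Set.range Φ), ∀ v ∈ convexHull ℝ (Set.range Φ),
      ‖u - v‖ ≤ D)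
    (z u : ℕ → EuclideanSpace ℝ (Fin m))
    (hz0 : z 0 = 0)
    (hgreedy : ∀ k : ℕ, ∃ j : Fin N, z (k + 1) = z k + Φ j ∧
      ∀ i : Fin N, ℓ (((k : ℝ) + 1)⁻¹ • (z k + Φ j)) ≤ ℓ (((k : ℝ) + 1)⁻¹ • (z k + Φ i)))
    (hu : ∀ k : ℕ, u (k + 1) = ((k : ℝ) + 1)⁻¹ • z (k + 1))
    (k : ℕ) (hk : 2 ≤ k) :
    ℓ (u k) ≤ (1 - 1 / (k : ℝ)) * ℓ (u (k - 1)) + (1 / (k : ℝ)) * ℓ ((N : ℝ)⁻¹ • ∑ i : Fin N, Φ i)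
      + (1 / (k : ℝ) ^ 2) * D ^ 2 := by
  obtain ⟨p, rfl⟩ : ∃ p, k = p + 2 := ⟨k - 2, by omega⟩
  obtain ⟨j, hzj, hmin⟩ := hgreedy (p + 1)
  have hNpos : (0:ℝ) < (N:ℝ) := by exact_mod_cast hN
  set γ : ℝ := ((p : ℝ) + 2)⁻¹ with hγdef
  have hp2 : (0:ℝ) < (p:ℝ) + 2 := by positivity
  have hγpos : 0 < γ := by positivity
  have hγ1 : γ ≤ 1 := by
    rw [hγdef]
    exact inv_le_one_of_one_le₀ (by linarith)
  have hγ2 : (((p + 1 : ℕ) : ℝ) + 1)⁻¹ = γ := by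
    rw [hγdef]; congr 1; push_cast; ring
  rw [hγ2] at hmin
  -- the iterate u (p+2)
  have huk : u (p + 2) = γ • (z (p + 1) + Φ j) := by
    have h := hu (p + 1)
    rw [hzj, hγ2] at h
    exact h
  have hzw : z (p + 1) = ((p : ℝ) + 1) • u (p + 1) := by
    rw [hu p, smul_smul, mul_inv_cancel₀ (by positivity), one_smul]
  set bbar : EuclideanSpace ℝ (Fin m) := (N : ℝ)⁻¹ • ∑ i : Fin N, Φ i with hbb
  have hbarmem : bbar ∈ convexHull ℝ (Set.range Φ) := greedy_aux_bar_mem hN Φ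
  set a' : EuclideanSpace ℝ (Fin m) := u (p + 1) - y with ha'
  set b' : EuclideanSpace ℝ (Fin m) := bbar - y with hb'
  set x : EuclideanSpace ℝ (Fin m) := (1 - γ) • a' + γ • b' with hx
  clear_value γ bbar a' b' x
  -- point identity
  have hpoint : ∀ i : Fin N, γ • (z (p + 1) + Φ i) - y = x + γ • (Φ i - bbar) := by
    intro i
    rw [hzw, hx, ha', hb']
    match_scalars
    all_goals simp only [hγdef]
    all_goals field_simp
    all_goals try ring
  -- per-index bound
  have hstep : ∀ i : Fin N, ℓ (u (p + 2)) ≤ (1/2) * ‖x + γ • (Φ i - bbar)‖^2 := by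
    intro i
    calc ℓ (u (p + 2)) = ℓ (γ • (z (p + 1) + Φ j)) := by rw [huk]
      _ ≤ ℓ (γ • (z (p + 1) + Φ i)) := hmin i
      _ = (1/2) * ‖x + γ • (Φ i - bbar)‖^2 := by rw [hℓ, hpoint i]
  -- sum of deviations is zero
  have hc_sum : ∑ i : Fin N, (Φ i - bbar) = 0 := by
    rw [Finset.sum_sub_distrib, Finset.sum_const, Finset.card_univ, Fintype.card_fin,
      ← Nat.cast_smul_eq_nsmul ℝ, hbb, smul_smul, mul_inv_cancel₀ (ne_of_gt hNpos), one_smul,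
      sub_self]
  -- expansion of each squared norm
  have hexp : ∀ i : Fin N, (1/2) * ‖x + γ • (Φ i - bbar)‖^2
      = (1/2) * ‖x‖^2 + γ * ⟪x, Φ i - bbar⟫ + (γ^2/2) * ‖Φ i - bbar‖^2 := by
    intro i
    rw [@norm_add_sq_real, real_inner_smul_right, norm_smul, mul_pow, Real.norm_eq_abs, sq_abs]
    ring
  -- sum identity
  have hsum_eq : ∑ i : Fin N, (1/2) * ‖x + γ • (Φ i - bbar)‖^2
      = (N:ℝ) * ((1/2) * ‖x‖^2) + (γ^2/2) * ∑ i : Fin N, ‖Φ i - bbar‖^2 := by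
    rw [Finset.sum_congr rfl (fun i _ => hexp i)]
    rw [Finset.sum_add_distrib, Finset.sum_add_distrib, Finset.sum_const, Finset.card_univ,
      Fintype.card_fin, ← Finset.mul_sum, ← Finset.mul_sum, ← inner_sum, hc_sum,
      inner_zero_right, nsmul_eq_mul]
    ring
  -- deviation bound
  have hdev : ∑ i : Fin N, ‖Φ i - bbar‖^2 ≤ (N:ℝ) * D^2 := by
    calc ∑ i : Fin N, ‖Φ i - bbar‖^2 ≤ ∑ _i : Fin N, D^2 := by
          refine Finset.sum_le_sum (fun i _ => ?_)
          have h := hD (Φ i) (subset_convexHull ℝ _ (Set.mem_range_self i)) bbar hbarmem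
          exact pow_le_pow_left₀ (norm_nonneg _) h 2
      _ = (N:ℝ) * D^2 := by
          rw [Finset.sum_const, Finset.card_univ, Fintype.card_fin, nsmul_eq_mul]
  -- convexity bound on ‖x‖²
  have hxbound : ‖x‖^2 ≤ (1 - γ) * ‖a'‖^2 + γ * ‖b'‖^2 := by
    have e1 : ‖x‖^2 = (1-γ)^2 * ‖a'‖^2 + 2*((1-γ)*(γ*⟪a', b'⟫)) + γ^2 * ‖b'‖^2 := by
      rw [hx, @norm_add_sq_real, real_inner_smul_left, real_inner_smul_right,
        norm_smul, norm_smul, mul_pow, mul_pow, Real.norm_eq_abs, Real.norm_eq_abs,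
        sq_abs, sq_abs]
    have e2 : ‖a' - b'‖^2 = ‖a'‖^2 - 2*⟪a', b'⟫ + ‖b'‖^2 := by
      rw [@norm_sub_sq_real]
    nlinarith [sq_nonneg ‖a' - b'‖, mul_nonneg hγpos.le (sub_nonneg.2 hγ1)]
  -- averaging
  have hNmul : (N:ℝ) * ℓ (u (p + 2)) ≤ ∑ i : Fin N, (1/2) * ‖x + γ • (Φ i - bbar)‖^2 := by
    calc (N:ℝ) * ℓ (u (p + 2)) = ∑ _i : Fin N, ℓ (u (p + 2)) := by
          rw [Finset.sum_const, Finset.card_univ, Fintype.card_fin, nsmul_eq_mul]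
      _ ≤ _ := Finset.sum_le_sum (fun i _ => hstep i)
  have hmainN : (N:ℝ) * ℓ (u (p + 2))
      ≤ (N:ℝ) * ((1/2) * ((1 - γ) * ‖a'‖^2 + γ * ‖b'‖^2)) + (γ^2/2) * ((N:ℝ) * D^2) := by
    rw [hsum_eq] at hNmul
    have t1 : (N:ℝ) * ((1/2) * ‖x‖^2) ≤ (N:ℝ) * ((1/2) * ((1 - γ) * ‖a'‖^2 + γ * ‖b'‖^2)) := by
      apply mul_le_mul_of_nonneg_left _ hNpos.le
      linarith [hxbound]
    have t2 : (γ^2/2) * (∑ i : Fin N, ‖Φ i - bbar‖^2) ≤ (γ^2/2) * ((N:ℝ) * D^2) :=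
      mul_le_mul_of_nonneg_left hdev (by positivity)
    linarith
  have hmain : ℓ (u (p + 2)) ≤ (1/2) * ((1 - γ) * ‖a'‖^2 + γ * ‖b'‖^2) + (γ^2/2) * D^2 := by
    have h2 : (N:ℝ) * ℓ (u (p + 2))
        ≤ (N:ℝ) * ((1/2) * ((1 - γ) * ‖a'‖^2 + γ * ‖b'‖^2) + (γ^2/2) * D^2) := by
      calc (N:ℝ) * ℓ (u (p + 2))
          ≤ (N:ℝ) * ((1/2) * ((1 - γ) * ‖a'‖^2 + γ * ‖b'‖^2)) + (γ^2/2) * ((N:ℝ) * D^2) :=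
            hmainN
        _ = (N:ℝ) * ((1/2) * ((1 - γ) * ‖a'‖^2 + γ * ‖b'‖^2) + (γ^2/2) * D^2) := by ring
    exact (mul_le_mul_iff_right₀ hNpos).mp h2
  -- finish: rewrite the goal
  have hk1 : (p + 2 - 1 : ℕ) = p + 1 := rfl
  rw [hk1, hℓ (u (p+1)), hℓ bbar, ← ha', ← hb']
  have hkcast : ((p + 2 : ℕ) : ℝ) = (p:ℝ) + 2 := by push_cast; ring
  rw [hkcast]
  rw [one_div, one_div, one_div, ← inv_pow, ← hγdef]
  have h0 : 0 ≤ γ^2 * D^2 := mul_nonneg (sq_nonneg γ) (sq_nonneg D)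
  have hhalf : (γ^2/2) * D^2 ≤ γ^2 * D^2 := by linarith
  have hgoal : (1/2) * ((1 - γ) * ‖a'‖^2 + γ * ‖b'‖^2) + (γ^2/2) * D^2
      ≤ (1 - γ) * (2⁻¹ * ‖a'‖^2) + γ * (2⁻¹ * ‖b'‖^2) + γ^2 * D^2 := by
    have : (1/2) * ((1 - γ) * ‖a'‖^2 + γ * ‖b'‖^2)
        = (1 - γ) * (2⁻¹ * ‖a'‖^2) + γ * (2⁻¹ * ‖b'‖^2) := by ring
    linarith
  exact le_trans hmain hgoal
end

section
/- Let β > 0 and C > 0 be real constants, and let (a_k)_{k ≥ 0} be a sequence of real numbers with a_0 = 0 such that |a_{k+1}|² ≤ |a_k|² − 2β|a_k| + C for all k ≥ 0. Then |a_k| ≤ max(√C, C/2, C/(2β)) for all k ≥ 0. -/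
/-- **Recursive sequence bound (Lemma A.4).**
If `a_0 = 0` and `|a_{k+1}|² ≤ |a_k|² − 2β|a_k| + C` for all `k ≥ 0`, with `β, C > 0`,
then `|a_k| ≤ max(√C, C/2, C/(2β))` for all `k ≥ 0`. -/
theorem recursive_sequence_bound
    (β C : ℝ) (hβ : 0 < β) (hC : 0 < C)
    (a : ℕ → ℝ) (ha0 : a 0 = 0)
    (hrec : ∀ k : ℕ, |a (k + 1)| ^ 2 ≤ |a k| ^ 2 - 2 * β * |a k| + C) :
    ∀ k : ℕ, |a k| ≤ max (Real.sqrt C) (max (C / 2) (C / (2 * β))) := by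
  set M := max (Real.sqrt C) (max (C / 2) (C / (2 * β))) with hM
  have hMC : Real.sqrt C ≤ M := le_max_left _ _
  have hM2β : C / (2 * β) ≤ M := le_trans (le_max_right _ _) (le_max_right _ _)
  have hM0 : 0 < M := lt_of_lt_of_le (Real.sqrt_pos.mpr hC) hMC
  have hs := Real.sq_sqrt hC.le
  have hCM2 : C ≤ M ^ 2 := by nlinarith [Real.sqrt_nonneg C]
  have h2βM : C ≤ 2 * β * M := by
    rw [div_le_iff₀ (by positivity)] at hM2β; linarith
  intro k
  induction k with
  | zero => simpa [ha0] using hM0.le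
  | succ n ih =>
    have hrecn := hrec n
    have hn : 0 ≤ |a n| := abs_nonneg _
    have key : |a (n + 1)| ^ 2 ≤ M ^ 2 := by
      rcases le_or_gt (|a n|) (2 * β) with h | h
      · nlinarith
      · nlinarith [mul_nonneg (sub_nonneg.mpr ih) (by linarith : (0:ℝ) ≤ M + |a n| - 2 * β)]
    nlinarith [abs_nonneg (a (n + 1))]
end

section
/- Suppose γ > 0 and the closed Euclidean ball B(y, γ) = {v ∈ ℝ^m : ‖v − y‖ ≤ γ} is contained in M_N. Define w_k = k·y − z_k (so w_k = k(y − u_k) and w_0 = 0). Then for every integer k ≥ 1, the greedy forward selection iterates satisfy ‖w_k‖² ≤ ‖w_{k−1}‖² − 2γ·‖w_{k−1}‖ + D². -/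
open scoped RealInnerProductSpace


/-- **Recursive residual bound under the ball condition.**
If the closed ball `B(y, γ) ⊆ M_N` with `γ > 0` and `w_k = k·y − z_k`, then for every
integer `k ≥ 1` the greedy forward selection iterates satisfy
`‖w_k‖² ≤ ‖w_{k−1}‖² − 2γ‖w_{k−1}‖ + D²`. -/
theorem greedy_residual_recursive_bound
    (m N : ℕ)
    (Φ : Fin N → EuclideanSpace ℝ (Fin m)) (y : EuclideanSpace ℝ (Fin m))
    (ℓ : EuclideanSpace ℝ (Fin m) → ℝ)
    (hℓ : ∀ z, ℓ z = (1/2) * ‖z - y‖^2)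
    (D : ℝ) (hD0 : 0 ≤ D)
    (hD : ∀ u ∈ convexHull ℝ (Set.range Φ), ∀ v ∈ convexHull ℝ (Set.range Φ),
      ‖u - v‖ ≤ D)
    (γ : ℝ) (hγ : 0 < γ)
    (hball : Metric.closedBall y γ ⊆ convexHull ℝ (Set.range Φ))
    (z u w : ℕ → EuclideanSpace ℝ (Fin m))
    (hz0 : z 0 = 0)
    (hgreedy : ∀ k : ℕ, ∃ j : Fin N, z (k + 1) = z k + Φ j ∧
      ∀ i : Fin N, ℓ (((k : ℝ) + 1)⁻¹ • (z k + Φ j)) ≤ ℓ (((k : ℝ) + 1)⁻¹ • (z k + Φ i)))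
    (hu : ∀ k : ℕ, u (k + 1) = ((k : ℝ) + 1)⁻¹ • z (k + 1))
    (hw : ∀ k : ℕ, w k = (k : ℝ) • y - z k)
    (k : ℕ) (hk : 1 ≤ k) :
    ‖w k‖ ^ 2 ≤ ‖w (k - 1)‖ ^ 2 - 2 * γ * ‖w (k - 1)‖ + D ^ 2 := by
  obtain ⟨n, rfl⟩ : ∃ n, k = n + 1 := ⟨k - 1, by omega⟩
  simp only [Nat.add_sub_cancel]
  obtain ⟨j, hzj, hmin⟩ := hgreedy n
  set c : ℝ := (n : ℝ) + 1 with hc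
  have hcpos : 0 < c := by positivity
  have hw1 : w (n + 1) = w n + (y - Φ j) := by
    rw [hw (n + 1), hw n, hzj]
    push_cast
    module
  -- key comparison coming from greediness
  have key : ∀ i : Fin N, ‖w (n + 1)‖ ≤ ‖w n + (y - Φ i)‖ := by
    intro i
    have e : ∀ q : Fin N, c⁻¹ • (z n + Φ q) - y = (-c⁻¹) • (w n + (y - Φ q)) := by
      intro q
      have hy : c⁻¹ • (c • y) = y := inv_smul_smul₀ hcpos.ne' y
      rw [hw n]
      nth_rewrite 1 [← hy]
      rw [hc]
      push_cast
      module
    have h := hmin i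
    rw [hℓ, hℓ, e j, e i] at h
    have h2 : ‖(-c⁻¹) • (w n + (y - Φ j))‖ ≤ ‖(-c⁻¹) • (w n + (y - Φ i))‖ := by
      have h3 : ‖(-c⁻¹) • (w n + (y - Φ j))‖ ^ 2 ≤ ‖(-c⁻¹) • (w n + (y - Φ i))‖ ^ 2 := by
        nlinarith
      exact (pow_le_pow_iff_left₀ (norm_nonneg _) (norm_nonneg _) two_ne_zero).mp h3
    rw [norm_smul, norm_smul] at h2
    have hpos : 0 < ‖(-c⁻¹ : ℝ)‖ := by
      simp only [norm_neg, Real.norm_eq_abs, abs_of_pos (inv_pos.mpr hcpos)]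
      exact inv_pos.mpr hcpos
    rw [hw1]
    exact le_of_mul_le_mul_left h2 hpos
  -- the point v in the ball
  set v : EuclideanSpace ℝ (Fin m) := y + (γ / ‖w n‖) • w n with hv
  have hvy : v - y = (γ / ‖w n‖) • w n := by rw [hv]; abel
  have hvmem : v ∈ convexHull ℝ (Set.range Φ) := by
    apply hball
    rw [Metric.mem_closedBall, dist_eq_norm, hvy, norm_smul]
    rcases eq_or_ne (w n) 0 with h0 | h0
    · simp [h0, hγ.le]
    · rw [Real.norm_eq_abs, abs_of_nonneg (by positivity),
        div_mul_cancel₀ _ (norm_ne_zero_iff.mpr h0)]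
  have hymem : y ∈ convexHull ℝ (Set.range Φ) := hball (by simp [hγ.le])
  have hinner : ⟪w n, y - v⟫ = -(γ * ‖w n‖) := by
    have hyv : y - v = -((γ / ‖w n‖) • w n) := by rw [hv]; abel
    rw [hyv, inner_neg_right, real_inner_smul_right, real_inner_self_eq_norm_sq]
    rcases eq_or_ne (w n) 0 with h0 | h0
    · simp [h0]
    · have hn0 : ‖w n‖ ≠ 0 := norm_ne_zero_iff.mpr h0
      field_simp
  -- convex combination representation of v
  rw [convexHull_range_eq_exists_affineCombination] at hvmem
  obtain ⟨s, μ, hμ0, hμ1, hμv⟩ := hvmem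
  rw [Finset.affineCombination_eq_linear_combination s Φ μ hμ1] at hμv
  -- main chain
  have step1 : ‖w (n + 1)‖ ^ 2 ≤ ∑ i ∈ s, μ i * ‖w n + (y - Φ i)‖ ^ 2 := by
    calc ‖w (n + 1)‖ ^ 2 = ∑ i ∈ s, μ i * ‖w (n + 1)‖ ^ 2 := by
          rw [← Finset.sum_mul, hμ1, one_mul]
      _ ≤ ∑ i ∈ s, μ i * ‖w n + (y - Φ i)‖ ^ 2 := by
          refine Finset.sum_le_sum fun i hi => ?_
          exact mul_le_mul_of_nonneg_left
            (pow_le_pow_left₀ (norm_nonneg _) (key i) 2) (hμ0 i hi)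
  have step2 : ∑ i ∈ s, μ i * ‖w n + (y - Φ i)‖ ^ 2
      = ‖w n‖ ^ 2 + 2 * ⟪w n, y - v⟫ + ∑ i ∈ s, μ i * ‖y - Φ i‖ ^ 2 := by
    have hyv : (∑ i ∈ s, μ i • (y - Φ i)) = y - v := by
      simp only [smul_sub]
      rw [Finset.sum_sub_distrib, ← Finset.sum_smul, hμ1, one_smul, hμv]
    calc ∑ i ∈ s, μ i * ‖w n + (y - Φ i)‖ ^ 2
        = ∑ i ∈ s, (μ i * ‖w n‖ ^ 2 + 2 * ⟪w n, μ i • (y - Φ i)⟫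
            + μ i * ‖y - Φ i‖ ^ 2) := by
          refine Finset.sum_congr rfl fun i _ => ?_
          rw [norm_add_sq_real (w n) (y - Φ i), real_inner_smul_right]
          ring
      _ = ‖w n‖ ^ 2 + 2 * ⟪w n, y - v⟫ + ∑ i ∈ s, μ i * ‖y - Φ i‖ ^ 2 := by
          rw [Finset.sum_add_distrib, Finset.sum_add_distrib, ← Finset.sum_mul, hμ1,
            one_mul, ← Finset.mul_sum, ← inner_sum, hyv]
  have step3 : ∑ i ∈ s, μ i * ‖y - Φ i‖ ^ 2 ≤ D ^ 2 := by
    calc ∑ i ∈ s, μ i * ‖y - Φ i‖ ^ 2 ≤ ∑ i ∈ s, μ i * D ^ 2 := by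
          refine Finset.sum_le_sum fun i hi => ?_
          refine mul_le_mul_of_nonneg_left ?_ (hμ0 i hi)
          exact pow_le_pow_left₀ (norm_nonneg _)
            (hD y hymem (Φ i) (subset_convexHull ℝ _ (Set.mem_range_self i))) 2
      _ = D ^ 2 := by rw [← Finset.sum_mul, hμ1, one_mul]
  linarith [step1, step2.le, step3, hinner]
end

section
/- Suppose γ > 0 and the closed Euclidean ball B(y, γ) = {v ∈ ℝ^m : ‖v − y‖ ≤ γ} is contained in M_N. Define w_k = k·y − z_k (so w_k = k(y − u_k) and w_0 = 0). Then for every integer k ≥ 0, the greedy forward selection iterates satisfy ‖w_k‖ ≤ max(D, D²/2, D²/(2γ)). -/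
lemma greedy_exists_inner_le {m N : ℕ} (Φ : Fin N → EuclideanSpace ℝ (Fin m)) (hN : 0 < N)
    (c x : EuclideanSpace ℝ (Fin m)) (hx : x ∈ convexHull ℝ (Set.range Φ)) :
    ∃ i : Fin N, (inner ℝ c (x) : ℝ) ≤ (inner ℝ c (Φ i) : ℝ) := by
  haveI : Nonempty (Fin N) := ⟨⟨0, hN⟩⟩
  obtain ⟨i, _, hi⟩ := Finset.exists_mem_eq_sup' Finset.univ_nonempty
    (fun i => ((inner ℝ c (Φ i) : ℝ) : ℝ))
  refine ⟨i, ?_⟩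
  have hsub : convexHull ℝ (Set.range Φ) ⊆ {z | (inner ℝ c (z) : ℝ) ≤ (inner ℝ c (Φ i) : ℝ)} := by
    apply convexHull_min
    · rintro _ ⟨j, rfl⟩
      have := Finset.le_sup' (fun i => ((inner ℝ c (Φ i) : ℝ) : ℝ)) (Finset.mem_univ j)
      rw [hi] at this; exact this
    · exact convex_halfSpace_le
        ⟨fun a b => inner_add_right c a b, fun r a => real_inner_smul_right c a r⟩ _
  exact hsub hx

set_option maxHeartbeats 1000000 in
/-- **Residual norm bound under the ball condition.**
If the closed ball `B(y, γ) ⊆ M_N` with `γ > 0` and `w_k = k·y − z_k`, then for every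
integer `k ≥ 0` the greedy forward selection iterates satisfy
`‖w_k‖ ≤ max(D, D²/2, D²/(2γ))`. -/
theorem greedy_residual_norm_bound
    (m N : ℕ)
    (Φ : Fin N → EuclideanSpace ℝ (Fin m)) (y : EuclideanSpace ℝ (Fin m))
    (ℓ : EuclideanSpace ℝ (Fin m) → ℝ)
    (hℓ : ∀ z, ℓ z = (1/2) * ‖z - y‖^2)
    (D : ℝ) (hD0 : 0 ≤ D)
    (hD : ∀ u ∈ convexHull ℝ (Set.range Φ), ∀ v ∈ convexHull ℝ (Set.range Φ),
      ‖u - v‖ ≤ D)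
    (γ : ℝ) (hγ : 0 < γ)
    (hball : Metric.closedBall y γ ⊆ convexHull ℝ (Set.range Φ))
    (z u w : ℕ → EuclideanSpace ℝ (Fin m))
    (hz0 : z 0 = 0)
    (hgreedy : ∀ k : ℕ, ∃ j : Fin N, z (k + 1) = z k + Φ j ∧
      ∀ i : Fin N, ℓ (((k : ℝ) + 1)⁻¹ • (z k + Φ j)) ≤ ℓ (((k : ℝ) + 1)⁻¹ • (z k + Φ i)))
    (hu : ∀ k : ℕ, u (k + 1) = ((k : ℝ) + 1)⁻¹ • z (k + 1))
    (hw : ∀ k : ℕ, w k = (k : ℝ) • y - z k) :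
    ∀ k : ℕ, ‖w k‖ ≤ max D (max (D ^ 2 / 2) (D ^ 2 / (2 * γ))) := by
  set M := max D (max (D ^ 2 / 2) (D ^ 2 / (2 * γ))) with hM
  have hDM : D ≤ M := le_max_left _ _
  have hDγM : D ^ 2 / (2 * γ) ≤ M := le_trans (le_max_right _ _) (le_max_right _ _)
  have hD2 : D ^ 2 ≤ 2 * γ * M := by
    rw [div_le_iff₀ (by positivity)] at hDγM; linarith
  clear_value M
  have hyhull : y ∈ convexHull ℝ (Set.range Φ) :=
    hball (Metric.mem_closedBall_self hγ.le)
  intro k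
  induction k with
  | zero =>
    have : w 0 = 0 := by rw [hw 0, hz0]; simp
    rw [this, norm_zero]; linarith
  | succ k ih =>
    obtain ⟨j, hj, hopt⟩ := hgreedy k
    have hN : 0 < N := j.pos
    set c : ℝ := ((k : ℝ) + 1)⁻¹ with hc
    have hcpos : (0:ℝ) < c := by positivity
    -- key rewriting of iterates
    have hrw : ∀ i : Fin N, c • (z k + Φ i) - y = (-c) • (w k - (Φ i - y)) := by
      intro i
      have hzk : z k = (k : ℝ) • y - w k := by rw [hw k]; abel
      have hy1 : c • (((k:ℝ) + 1) • y) = y := by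
        rw [smul_smul, hc, inv_mul_cancel₀ (by positivity), one_smul]
      calc c • (z k + Φ i) - y = c • (z k + Φ i) - c • (((k:ℝ) + 1) • y) := by rw [hy1]
        _ = c • (z k + Φ i - ((k:ℝ) + 1) • y) := by rw [smul_sub]
        _ = (-c) • (w k - (Φ i - y)) := by
            rw [hzk]; rw [neg_smul, ← smul_neg]; congr 1
            have : ((k:ℝ) + 1) • y = (k:ℝ) • y + y := by rw [add_smul, one_smul]
            rw [this]; abel
    have hw1 : w (k + 1) = w k - (Φ j - y) := by
      rw [hw (k+1), hj, hw k]
      push_cast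
      rw [add_smul, one_smul]; abel
    -- greedy optimality in terms of w
    have hgopt : ∀ i : Fin N, ‖w (k+1)‖ ≤ ‖w k - (Φ i - y)‖ := by
      intro i
      have h := hopt i
      rw [hℓ, hℓ, hrw j, hrw i, norm_smul, norm_smul] at h
      rw [norm_neg, Real.norm_eq_abs, abs_of_pos hcpos] at h
      rw [hw1]
      have h' : (c * ‖w k - (Φ j - y)‖) ^ 2 ≤ (c * ‖w k - (Φ i - y)‖) ^ 2 := by linarith
      have h'' : c * ‖w k - (Φ j - y)‖ ≤ c * ‖w k - (Φ i - y)‖ :=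
        (pow_le_pow_iff_left₀ (by positivity) (by positivity) (by norm_num)).mp h'
      exact le_of_mul_le_mul_left h'' hcpos
    -- vertex with large inner product
    have hvert : ∃ i : Fin N, γ * ‖w k‖ ≤ (inner ℝ (w k) (Φ i - y) : ℝ) := by
      by_cases hwk : w k = 0
      · exact ⟨j, by simp [hwk]⟩
      · have hnorm : (0:ℝ) < ‖w k‖ := norm_pos_iff.mpr hwk
        set x : EuclideanSpace ℝ (Fin m) := y + (γ / ‖w k‖) • w k with hx
        have hxball : x ∈ Metric.closedBall y γ := by
          rw [Metric.mem_closedBall, dist_eq_norm, hx]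
          rw [add_sub_cancel_left, norm_smul]
          rw [Real.norm_of_nonneg (by positivity)]
          rw [div_mul_cancel₀ _ (ne_of_gt hnorm)]
        obtain ⟨i, hi⟩ := greedy_exists_inner_le Φ hN (w k) x (hball hxball)
        refine ⟨i, ?_⟩
        rw [inner_sub_right]
        have hxinner : (inner ℝ (w k) x : ℝ) = (inner ℝ (w k) y : ℝ) + γ * ‖w k‖ := by
          rw [hx, inner_add_right, real_inner_smul_right, real_inner_self_eq_norm_sq]
          field_simp
        rw [hxinner] at hi
        linarith
    obtain ⟨i, hi⟩ := hvert
    have hΦD : ‖Φ i - y‖ ≤ D :=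
      hD (Φ i) (subset_convexHull ℝ _ ⟨i, rfl⟩) y hyhull
    have hsq : ‖w k - (Φ i - y)‖ ^ 2 ≤ ‖w k‖ ^ 2 - 2 * γ * ‖w k‖ + D ^ 2 := by
      rw [← real_inner_self_eq_norm_sq, inner_sub_sub_self]
      rw [real_inner_self_eq_norm_sq, real_inner_self_eq_norm_sq]
      have : (inner ℝ (Φ i - y) (w k) : ℝ) = (inner ℝ (w k) (Φ i - y) : ℝ) := real_inner_comm _ _
      nlinarith [pow_le_pow_left₀ (norm_nonneg (Φ i - y)) hΦD 2]
    have hkey : ‖w (k+1)‖ ^ 2 ≤ ‖w k‖ ^ 2 - 2 * γ * ‖w k‖ + D ^ 2 := by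
      have := hgopt i
      nlinarith [norm_nonneg (w (k+1)), norm_nonneg (w k - (Φ i - y))]
    have ht0 : (0:ℝ) ≤ ‖w k‖ := norm_nonneg _
    have ha0 : (0:ℝ) ≤ ‖w (k+1)‖ := norm_nonneg _
    have hM0 : (0:ℝ) ≤ M := le_trans hD0 hDM
    have hDsqM : D ^ 2 ≤ M ^ 2 := pow_le_pow_left₀ hD0 hDM 2
    clear hopt hrw hgopt hgreedy hu hw hℓ hD hball hz0 hi hj hw1 hyhull hsq
    have hstep : ‖w k‖ ^ 2 - 2 * γ * ‖w k‖ + D ^ 2 ≤ M ^ 2 := by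
      rcases eq_or_lt_of_le hM0 with hM0' | hMpos
      · nlinarith
      · nlinarith [mul_nonneg (sub_nonneg.2 ih) (sub_nonneg.2 hDsqM),
          mul_nonneg ht0 (sub_nonneg.2 hD2),
          mul_nonneg ht0 (sub_nonneg.2 ih)]
    have hfin : ‖w (k+1)‖ ^ 2 ≤ M ^ 2 := le_trans hkey hstep
    exact (pow_le_pow_iff_left₀ ha0 hM0 two_ne_zero).mp hfin
end

section
/- Suppose γ > 0 and the closed Euclidean ball B(y, γ) = {v ∈ ℝ^m : ‖v − y‖ ≤ γ} is contained in M_N. Then for every integer k ≥ 1, the greedy forward selection iterates satisfy ℓ(u_k) ≤ max(D, D²/2, D²/(2γ))² / (2k²); in particular ℓ(u_k) = O(1/(k² · min(1, γ)²)). (Faster O(1/k²) rate, Lemma A.6 of the paper.) -/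
private lemma greedy_sq_le {a b : ℝ} (ha : 0 ≤ a) (hb : 0 ≤ b) (h : a ^ 2 ≤ b ^ 2) :
    a ≤ b := by nlinarith

private lemma greedy_quad_step {t C D γ : ℝ} (ht : 0 ≤ t) (htC : t ≤ C) (hC0 : 0 ≤ C)
    (hγ : 0 < γ) (hD0 : 0 ≤ D) (hCD : D ≤ C) (hCγ : D ^ 2 ≤ 2 * γ * C) :
    t ^ 2 - 2 * γ * t + D ^ 2 ≤ C ^ 2 := by
  have hDC : D ^ 2 ≤ C ^ 2 := by nlinarith
  rcases le_or_gt t (2 * γ) with h | h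
  · nlinarith [mul_nonneg ht (sub_nonneg.mpr h)]
  · have h5 : t * (t - 2 * γ) ≤ C * (t - 2 * γ) :=
      mul_le_mul_of_nonneg_right htC (by linarith)
    have h6 : C * t ≤ C * C := mul_le_mul_of_nonneg_left htC hC0
    nlinarith

/-- **Faster `O(1/k²)` rate under the ball condition (Lemma A.6).**
If the closed ball `B(y, γ) ⊆ M_N` with `γ > 0`, then for every integer `k ≥ 1`,
the greedy forward selection iterates satisfy
`ℓ(u_k) ≤ max(D, D²/2, D²/(2γ))² / (2k²)`. -/
theorem greedy_faster_rate
    (m N : ℕ)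
    (Φ : Fin N → EuclideanSpace ℝ (Fin m)) (y : EuclideanSpace ℝ (Fin m))
    (ℓ : EuclideanSpace ℝ (Fin m) → ℝ)
    (hℓ : ∀ z, ℓ z = (1/2) * ‖z - y‖^2)
    (D : ℝ) (hD0 : 0 ≤ D)
    (hD : ∀ u ∈ convexHull ℝ (Set.range Φ), ∀ v ∈ convexHull ℝ (Set.range Φ),
      ‖u - v‖ ≤ D)
    (γ : ℝ) (hγ : 0 < γ)
    (hball : Metric.closedBall y γ ⊆ convexHull ℝ (Set.range Φ))
    (z u : ℕ → EuclideanSpace ℝ (Fin m))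
    (hz0 : z 0 = 0)
    (hgreedy : ∀ k : ℕ, ∃ j : Fin N, z (k + 1) = z k + Φ j ∧
      ∀ i : Fin N, ℓ (((k : ℝ) + 1)⁻¹ • (z k + Φ j)) ≤ ℓ (((k : ℝ) + 1)⁻¹ • (z k + Φ i)))
    (hu : ∀ k : ℕ, u (k + 1) = ((k : ℝ) + 1)⁻¹ • z (k + 1))
    (k : ℕ) (hk : 1 ≤ k) :
    ℓ (u k) ≤ (max D (max (D ^ 2 / 2) (D ^ 2 / (2 * γ)))) ^ 2 / (2 * (k : ℝ) ^ 2) := by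
  classical
  obtain ⟨j0, -, -⟩ := hgreedy 0
  set C : ℝ := max D (max (D ^ 2 / 2) (D ^ 2 / (2 * γ))) with hC
  have hCD : D ≤ C := le_max_left _ _
  have hC0 : 0 ≤ C := hD0.trans hCD
  have hCγ : D ^ 2 ≤ 2 * γ * C := by
    have h1 : D ^ 2 / (2 * γ) ≤ C := le_trans (le_max_right _ _) (le_max_right _ _)
    have h2 : 0 < 2 * γ := by linarith
    calc D ^ 2 = (D ^ 2 / (2 * γ)) * (2 * γ) := by field_simp
    _ ≤ C * (2 * γ) := mul_le_mul_of_nonneg_right h1 h2.le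
    _ = 2 * γ * C := by ring
  have hy : y ∈ convexHull ℝ (Set.range Φ) := hball (Metric.mem_closedBall_self hγ.le)
  have hΦ : ∀ i, Φ i ∈ convexHull ℝ (Set.range Φ) := fun i =>
    subset_convexHull ℝ _ ⟨i, rfl⟩
  -- key: there is a vertex with small linear value
  have hlin : ∀ r : EuclideanSpace ℝ (Fin m), ∃ i : Fin N,
      (inner ℝ r (Φ i) : ℝ) ≤ (inner ℝ r y : ℝ) - γ * ‖r‖ := by
    intro r
    by_cases hr : r = 0
    · exact ⟨j0, by simp [hr]⟩
    · have hrn : 0 < ‖r‖ := norm_pos_iff.mpr hr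
      set v : EuclideanSpace ℝ (Fin m) := y - (γ / ‖r‖) • r with hv
      have hvball : v ∈ Metric.closedBall y γ := by
        have hvy : ‖v - y‖ = γ := by
          have h3 : v - y = -((γ / ‖r‖) • r) := by rw [hv]; abel
          rw [h3, norm_neg, norm_smul, Real.norm_eq_abs,
            abs_of_nonneg (div_nonneg hγ.le hrn.le)]
          field_simp
        simp [Metric.mem_closedBall, dist_eq_norm, hvy]
      have hvhull : v ∈ convexHull ℝ (Set.range Φ) := hball hvball
      obtain ⟨i, -, hi⟩ := Finset.exists_min_image Finset.univ
        (fun i : Fin N => (inner ℝ r (Φ i) : ℝ)) ⟨j0, Finset.mem_univ _⟩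
      refine ⟨i, ?_⟩
      have hconv : Convex ℝ {x : EuclideanSpace ℝ (Fin m) |
          (inner ℝ r (Φ i) : ℝ) ≤ (inner ℝ r x : ℝ)} := by
        refine convex_halfSpace_ge ?_ _
        exact ⟨fun a b => inner_add_right _ _ _, fun c x => real_inner_smul_right _ _ _⟩
      have hsub : Set.range Φ ⊆ {x : EuclideanSpace ℝ (Fin m) |
          (inner ℝ r (Φ i) : ℝ) ≤ (inner ℝ r x : ℝ)} := by
        rintro x ⟨i', rfl⟩
        exact hi i' (Finset.mem_univ _)
      have hvmem := convexHull_min hsub hconv hvhull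
      have hval : (inner ℝ r v : ℝ) = (inner ℝ r y : ℝ) - γ * ‖r‖ := by
        rw [hv, inner_sub_right, real_inner_smul_right, real_inner_self_eq_norm_sq]
        field_simp
      calc (inner ℝ r (Φ i) : ℝ) ≤ inner ℝ r v := hvmem
      _ = (inner ℝ r y : ℝ) - γ * ‖r‖ := hval
  -- main induction
  have hbound : ∀ n : ℕ, ‖z n - (n : ℝ) • y‖ ≤ C := by
    intro n
    induction n with
    | zero => simpa [hz0] using hC0
    | succ n ih =>
      obtain ⟨j, hzj, hmin⟩ := hgreedy n
      set r : EuclideanSpace ℝ (Fin m) := z n - (n : ℝ) • y with hrdef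
      obtain ⟨i, hi⟩ := hlin r
      have hn1 : (0 : ℝ) < (n : ℝ) + 1 := by positivity
      have hrw : ∀ a : EuclideanSpace ℝ (Fin m),
          ((n : ℝ) + 1)⁻¹ • (z n + a) - y = ((n : ℝ) + 1)⁻¹ • (r + (a - y)) := by
        intro a
        have h4 : r + (a - y) = (z n + a) - ((n : ℝ) + 1) • y := by
          rw [hrdef, add_smul, one_smul]; abel
        rw [h4, smul_sub, smul_smul, inv_mul_cancel₀ hn1.ne', one_smul]
      have hcomp : ‖r + (Φ j - y)‖ ^ 2 ≤ ‖r + (Φ i - y)‖ ^ 2 := by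
        have h := hmin i
        rw [hℓ, hℓ, hrw, hrw, norm_smul, norm_smul, Real.norm_eq_abs,
          abs_of_pos (inv_pos.mpr hn1), mul_pow, mul_pow] at h
        have hpos : (0 : ℝ) < (((n : ℝ) + 1)⁻¹) ^ 2 := by positivity
        nlinarith
      have hnew : z (n + 1) - ((n : ℝ) + 1) • y = r + (Φ j - y) := by
        rw [hzj, hrdef, add_smul, one_smul]; abel
      have hΦiy : ‖Φ i - y‖ ≤ D := hD _ (hΦ i) _ hy
      have hsq : ‖r + (Φ i - y)‖ ^ 2 = ‖r‖ ^ 2 + 2 * (inner ℝ r (Φ i - y) : ℝ)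
          + ‖Φ i - y‖ ^ 2 := by
        rw [norm_add_sq_real]
      have hinner : (inner ℝ r (Φ i - y) : ℝ) ≤ -(γ * ‖r‖) := by
        rw [inner_sub_right]; linarith
      have hfin : ‖z (n + 1) - ((n : ℝ) + 1) • y‖ ^ 2 ≤
          ‖r‖ ^ 2 - 2 * γ * ‖r‖ + D ^ 2 := by
        rw [hnew]
        calc ‖r + (Φ j - y)‖ ^ 2 ≤ ‖r + (Φ i - y)‖ ^ 2 := hcomp
        _ = ‖r‖ ^ 2 + 2 * (inner ℝ r (Φ i - y) : ℝ) + ‖Φ i - y‖ ^ 2 := hsq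
        _ ≤ ‖r‖ ^ 2 - 2 * γ * ‖r‖ + D ^ 2 := by nlinarith [norm_nonneg (Φ i - y)]
      have hCsq : ‖r‖ ^ 2 - 2 * γ * ‖r‖ + D ^ 2 ≤ C ^ 2 :=
        greedy_quad_step (norm_nonneg r) ih hC0 hγ hD0 hCD hCγ
      have hsqle : ‖z (n + 1) - ((n : ℝ) + 1) • y‖ ^ 2 ≤ C ^ 2 := le_trans hfin hCsq
      have hcast : ((n + 1 : ℕ) : ℝ) = (n : ℝ) + 1 := by push_cast; ring
      rw [hcast]
      exact greedy_sq_le (norm_nonneg _) hC0 hsqle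
  -- conclude
  obtain ⟨n, rfl⟩ : ∃ n, k = n + 1 := ⟨k - 1, by omega⟩
  set K : ℝ := (n : ℝ) + 1 with hK
  have hKpos : (0 : ℝ) < K := by positivity
  have hcast : ((n + 1 : ℕ) : ℝ) = K := by rw [hK]; push_cast; ring
  set w : EuclideanSpace ℝ (Fin m) := z (n + 1) - K • y with hw
  have hwC : ‖w‖ ≤ C := by
    have := hbound (n + 1)
    rwa [hcast] at this
  have huk : u (n + 1) - y = K⁻¹ • w := by
    rw [hu n, ← hK, hw, smul_sub, smul_smul, inv_mul_cancel₀ hKpos.ne', one_smul]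
  have hwsq : ‖w‖ ^ 2 ≤ C ^ 2 := by
    have := norm_nonneg w
    nlinarith
  rw [hℓ, huk, norm_smul, Real.norm_eq_abs, abs_of_pos (inv_pos.mpr hKpos), hcast]
  calc (1/2) * (K⁻¹ * ‖w‖) ^ 2 = ‖w‖ ^ 2 * (2 * K ^ 2)⁻¹ := by
        field_simp
  _ ≤ C ^ 2 * (2 * K ^ 2)⁻¹ := mul_le_mul_of_nonneg_right hwsq (by positivity)
  _ = C ^ 2 / (2 * K ^ 2) := by rw [div_eq_mul_inv]
end
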